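/- Let α be a nonempty finite type and p : α → ℝ a probability vector, and let f, g : α → ℝ. Then E_p[|f − g|] ≤ |E_p[f] − E_p[g]| + sqrt(Var_p[f]) + sqrt(Var_p[g]). -/

import Mathlib

lemma key_lemma {α : Type*} [Fintype α] (p : α → ℝ) (hp : ∀ a, 0 ≤ p a)
    (hp1 : ∑ a, p a = 1) (h : α → ℝ) :
    ∑ a, p a * |h a| ≤ Real.sqrt (∑ a, p a * h a ^ 2) := by
  have := Real.sum_sqrt_mul_sqrt_le (f := p) (g := fun a => p a * h a ^ 2)
    Finset.univ hp (fun a => mul_nonneg (hp a) (sq_nonneg _))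
  rw [hp1, Real.sqrt_one, one_mul] at this
  refine le_trans (le_of_eq ?_) this
  refine Finset.sum_congr rfl fun a _ => ?_
  rw [Real.sqrt_mul (hp a), Real.sqrt_sq_eq_abs, ← mul_assoc,
    Real.mul_self_sqrt (hp a)]

/-- For a probability vector `p` and `f, g : α → ℝ`,
`E_p[|f − g|] ≤ |E_p[f] − E_p[g]| + sqrt(Var_p[f]) + sqrt(Var_p[g])`. -/
theorem mean_abs_diff_bound {α : Type*} [Fintype α] [Nonempty α]
    (p : α → ℝ) (hp : ∀ a, 0 ≤ p a) (hp1 : ∑ a, p a = 1)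
    (f g : α → ℝ) :
    ∑ a, p a * |f a - g a|
      ≤ |(∑ a, p a * f a) - ∑ a, p a * g a|
        + Real.sqrt (∑ a, p a * (f a - ∑ b, p b * f b) ^ 2)
        + Real.sqrt (∑ a, p a * (g a - ∑ b, p b * g b) ^ 2) := by
  set Ef := ∑ b, p b * f b
  set Eg := ∑ b, p b * g b
  have step1 : ∑ a, p a * |f a - g a|
      ≤ ∑ a, p a * (|Ef - Eg| + |f a - Ef| + |g a - Eg|) := by
    refine Finset.sum_le_sum fun a _ => mul_le_mul_of_nonneg_left ?_ (hp a)
    have : f a - g a = (Ef - Eg) + (f a - Ef) - (g a - Eg) := by ring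
    rw [this]
    calc |(Ef - Eg) + (f a - Ef) - (g a - Eg)|
        ≤ |(Ef - Eg) + (f a - Ef)| + |g a - Eg| := abs_sub _ _
      _ ≤ |Ef - Eg| + |f a - Ef| + |g a - Eg| :=
        add_le_add_left (abs_add_le _ _) _
  refine step1.trans ?_
  have expand : ∑ a, p a * (|Ef - Eg| + |f a - Ef| + |g a - Eg|)
      = |Ef - Eg| + (∑ a, p a * |f a - Ef|) + ∑ a, p a * |g a - Eg| := by
    simp only [mul_add, Finset.sum_add_distrib, ← Finset.sum_mul, hp1, one_mul]
  rw [expand]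
  gcongr
  · exact key_lemma p hp hp1 _
  · exact key_lemma p hp hp1 _
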